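/- Let Ω ⊂ ℝⁿ be a bounded open convex set, F a Finsler norm with polar F°, p > 1, and suppose Ω is NOT a Wulff shape centered at the origin. Then the set S = {x ∈ ∂Ω : F°(x) < r^F_max(Ω)} has positive H^{n-1} measure, and the strict inequality M_F(Ω)/P_F(Ω) < (r^F_max(Ω))^p holds. -/

import Mathlib

open MeasureTheory

noncomputable def polar {E : Type*} [NormedAddCommGroup E] [InnerProductSpace ℝ E]
    (F : E → ℝ) (v : E) : ℝ :=
  ⨆ ξ : {ξ : E // ξ ≠ 0}, (inner ℝ (ξ : E) v : ℝ) / F (ξ : E)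

section PolarLemmas

variable {E : Type*} [NormedAddCommGroup E] [InnerProductSpace ℝ E]
variable {F : E → ℝ} {a : ℝ}

lemma polar_term_le (ha : 0 < a) (hlow : ∀ ξ, a * ‖ξ‖ ≤ F ξ) (v : E) (ξ : {ξ : E // ξ ≠ 0}) :
    (inner ℝ (ξ : E) v : ℝ) / F (ξ : E) ≤ ‖v‖ / a := by
  have hξ : (0:ℝ) < ‖(ξ:E)‖ := norm_pos_iff.2 ξ.2
  have hFpos : 0 < F (ξ:E) := lt_of_lt_of_le (by positivity) (hlow ξ)
  rw [div_le_div_iff₀ hFpos ha]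
  have h1 : (inner ℝ (ξ:E) v : ℝ) ≤ ‖(ξ:E)‖ * ‖v‖ := real_inner_le_norm _ _
  nlinarith [norm_nonneg v, mul_le_mul_of_nonneg_right h1 ha.le,
    mul_le_mul_of_nonneg_left (hlow (ξ:E)) (norm_nonneg v)]

lemma polar_bddAbove (ha : 0 < a) (hlow : ∀ ξ, a * ‖ξ‖ ≤ F ξ) (v : E) :
    BddAbove (Set.range fun ξ : {ξ : E // ξ ≠ 0} => (inner ℝ (ξ : E) v : ℝ) / F (ξ : E)) :=
  ⟨‖v‖ / a, by rintro x ⟨ξ, rfl⟩; exact polar_term_le ha hlow v ξ⟩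

variable [Nontrivial E]
set_option linter.unusedSectionVars false

instance : Nonempty {ξ : E // ξ ≠ 0} := ⟨⟨Classical.choose (exists_ne (0:E)),
  Classical.choose_spec (exists_ne (0:E))⟩⟩

lemma polar_le (ha : 0 < a) (hlow : ∀ ξ, a * ‖ξ‖ ≤ F ξ) (v : E) :
    polar F v ≤ ‖v‖ / a :=
  ciSup_le (polar_term_le ha hlow v)

lemma term_le_polar (ha : 0 < a) (hlow : ∀ ξ, a * ‖ξ‖ ≤ F ξ) (v : E) (ξ : {ξ : E // ξ ≠ 0}) :
    (inner ℝ (ξ : E) v : ℝ) / F (ξ : E) ≤ polar F v :=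
  le_ciSup (polar_bddAbove ha hlow v) ξ

lemma polar_nonneg (ha : 0 < a) (hF0 : ∀ ξ, 0 ≤ F ξ)
    (hhom : ∀ (t : ℝ) (ξ : E), F (t • ξ) = |t| * F ξ)
    (hlow : ∀ ξ, a * ‖ξ‖ ≤ F ξ) (v : E) : 0 ≤ polar F v := by
  obtain ⟨e, he⟩ := exists_ne (0:E)
  rcases le_or_gt 0 (inner ℝ e v : ℝ) with h | h
  · exact le_trans (div_nonneg h (hF0 e)) (term_le_polar ha hlow v ⟨e, he⟩)
  · have hne : -e ≠ 0 := neg_ne_zero.2 he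
    have hFe : F (-e) = F e := by
      have := hhom (-1) e
      simpa using this
    refine le_trans ?_ (term_le_polar ha hlow v ⟨-e, hne⟩)
    simp only [inner_neg_left, hFe]
    exact div_nonneg (by linarith) (hF0 e)

lemma polar_sub_le (ha : 0 < a) (hlow : ∀ ξ, a * ‖ξ‖ ≤ F ξ) (v w : E) :
    polar F v ≤ polar F w + ‖v - w‖ / a := by
  refine ciSup_le fun ξ => ?_
  have hv : (inner ℝ (ξ:E) v : ℝ) = inner ℝ (ξ:E) w + inner ℝ (ξ:E) (v - w) := by
    rw [inner_sub_right]; ring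
  rw [hv, add_div]
  exact add_le_add (term_le_polar ha hlow w ξ) (polar_term_le ha hlow (v - w) ξ)

lemma continuous_polar (ha : 0 < a) (hlow : ∀ ξ, a * ‖ξ‖ ≤ F ξ) :
    Continuous (polar F) := by
  have : LipschitzWith (1/a).toNNReal (polar F) := by
    refine LipschitzWith.of_dist_le_mul fun v w => ?_
    rw [Real.dist_eq, Real.coe_toNNReal _ (by positivity), dist_eq_norm]
    rw [abs_sub_le_iff]
    constructor
    · have := polar_sub_le ha hlow v w
      rw [one_div, inv_mul_eq_div]
      linarith
    · have := polar_sub_le ha hlow w v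
      rw [norm_sub_rev w v] at this
      rw [one_div, inv_mul_eq_div]
      linarith
  exact this.continuous

lemma polar_smul (hc : 0 ≤ c) (F : E → ℝ) (v : E) :
    polar F (c • v) = c * polar F v := by
  unfold polar
  rw [Real.mul_iSup_of_nonneg hc]
  congr 1
  funext ξ
  rw [real_inner_smul_right, mul_div_assoc]

lemma polar_zero' (F : E → ℝ) : polar F 0 = 0 := by
  unfold polar
  simp [inner_zero_right]

end PolarLemmas

open Bornology

section Ray

variable {E : Type*} [NormedAddCommGroup E] [InnerProductSpace ℝ E]
variable {Ω : Set E}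

/-- The set of parameters of the ray from `z` in direction `u` staying in `Ω`. -/
def raySet (Ω : Set E) (z u : E) : Set ℝ := {t : ℝ | 0 ≤ t ∧ z + t • u ∈ Ω}

lemma raySet_zero_mem (hz : z ∈ Ω) : (0:ℝ) ∈ raySet Ω z u := by
  simp [raySet, hz]

lemma raySet_bddAbove (hbd : IsBounded Ω) (z : E) {u : E} (hu : u ≠ 0) :
    BddAbove (raySet Ω z u) := by
  obtain ⟨R, hR⟩ := isBounded_iff_forall_norm_le.1 hbd
  refine ⟨(R + ‖z‖) / ‖u‖, fun t ht => ?_⟩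
  have hu' : (0:ℝ) < ‖u‖ := norm_pos_iff.2 hu
  rw [le_div_iff₀ hu']
  have h1 : ‖z + t • u‖ ≤ R := hR _ ht.2
  have h2 : t * ‖u‖ = ‖t • u‖ := by
    rw [norm_smul, Real.norm_eq_abs, abs_of_nonneg ht.1]
  have h3 : ‖t • u‖ ≤ ‖z + t • u‖ + ‖z‖ := by
    have := norm_add_le (z + t • u) (-z)
    simpa using this
  linarith

lemma raySet_interval (hop : IsOpen Ω) (hconv : Convex ℝ Ω) (hz : z ∈ Ω)
    {t t' : ℝ} (ht' : t' ∈ raySet Ω z u) (h0 : 0 ≤ t) (htt' : t ≤ t') :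
    t ∈ raySet Ω z u := by
  rcases eq_or_lt_of_le htt' with rfl | hlt
  · exact ht'
  have ht'pos : 0 < t' := lt_of_le_of_lt h0 hlt
  refine ⟨h0, ?_⟩
  have key : z + t • u = (1 - t / t') • z + (t / t') • (z + t' • u) := by
    have h : (t / t') * t' = t := div_mul_cancel₀ t ht'pos.ne'
    rw [smul_add, smul_smul, h]
    module
  rw [key]
  have hle : t / t' ≤ 1 := (div_le_one ht'pos).2 htt'
  exact hconv hz ht'.2 (by linarith) (div_nonneg h0 ht'pos.le) (by ring)

/-- The exit parameter. -/
noncomputable def rayT (Ω : Set E) (z u : E) : ℝ := sSup (raySet Ω z u)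

lemma rayT_nonneg (hbd : IsBounded Ω) (hz : z ∈ Ω) (hu : u ≠ 0) : 0 ≤ rayT Ω z u :=
  le_csSup (raySet_bddAbove hbd z hu) (raySet_zero_mem hz)

lemma rayT_mem_frontier (hop : IsOpen Ω) (hconv : Convex ℝ Ω) (hbd : IsBounded Ω)
    (hz : z ∈ Ω) (hu : u ≠ 0) : z + rayT Ω z u • u ∈ frontier Ω := by
  have hbdd := raySet_bddAbove hbd z hu
  have hne : (raySet Ω z u).Nonempty := ⟨0, raySet_zero_mem hz⟩
  have hclos : z + rayT Ω z u • u ∈ closure Ω := by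
    have h1 : rayT Ω z u ∈ closure (raySet Ω z u) := csSup_mem_closure hne hbdd
    have hcont : Continuous fun t : ℝ => z + t • u := by continuity
    have h2 : raySet Ω z u ⊆ (fun t : ℝ => z + t • u) ⁻¹' closure Ω :=
      fun t ht => subset_closure ht.2
    have h3 : closure (raySet Ω z u) ⊆ (fun t : ℝ => z + t • u) ⁻¹' closure Ω :=
      closure_minimal h2 (isClosed_closure.preimage hcont)
    exact h3 h1
  have hnot : z + rayT Ω z u • u ∉ Ω := by
    intro hmem
    obtain ⟨ε, hε, hball⟩ := Metric.isOpen_iff.1 hop _ hmem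
    have hu' : (0:ℝ) < ‖u‖ := norm_pos_iff.2 hu
    set ε' := ε / (2 * ‖u‖) with hε'
    have hε'pos : 0 < ε' := by positivity
    have hmem' : rayT Ω z u + ε' ∈ raySet Ω z u := by
      refine ⟨by linarith [rayT_nonneg hbd hz hu], hball ?_⟩
      rw [Metric.mem_ball, dist_eq_norm]
      have : z + (rayT Ω z u + ε') • u - (z + rayT Ω z u • u) = ε' • u := by module
      rw [this, norm_smul, Real.norm_eq_abs, abs_of_pos hε'pos, hε']
      rw [div_mul_eq_mul_div, mul_comm]
      rw [div_lt_iff₀ (by positivity)]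
      nlinarith
    have := le_csSup hbdd hmem'
    unfold rayT at this
    linarith
  rw [frontier, hop.interior_eq]
  exact ⟨hclos, hnot⟩

lemma not_mem_of_rayT_lt (hbd : IsBounded Ω) (hz : z ∈ Ω) (hu : u ≠ 0)
    {t : ℝ} (ht : rayT Ω z u < t) : z + t • u ∉ Ω := by
  intro hmem
  have : t ∈ raySet Ω z u := ⟨le_trans (rayT_nonneg hbd hz hu) ht.le, hmem⟩
  exact absurd (le_csSup (raySet_bddAbove hbd z hu) this) (not_le.2 ht)

lemma mem_of_lt_rayT (hop : IsOpen Ω) (hconv : Convex ℝ Ω) (hz : z ∈ Ω)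
    {t : ℝ} (h0 : 0 ≤ t) (ht : t < rayT Ω z u) : z + t • u ∈ Ω := by
  obtain ⟨t', ht', htt'⟩ := exists_lt_of_lt_csSup ⟨0, raySet_zero_mem hz⟩ ht
  exact (raySet_interval hop hconv hz ht' h0 htt'.le).2

lemma not_mem_closure_of_rayT_lt (hop : IsOpen Ω) (hconv : Convex ℝ Ω) (hbd : IsBounded Ω)
    (hz : (0:E) ∈ Ω) (hu : u ≠ 0) {t : ℝ} (ht : rayT Ω 0 u < t) :
    t • u ∉ closure Ω := by
  intro hmem
  set T := rayT Ω 0 u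
  have hT0 : 0 ≤ T := rayT_nonneg hbd hz hu
  set s := (T + t) / 2 with hs
  have hsT : T < s := by simp only [hs]; linarith
  have hst : s < t := by simp only [hs]; linarith
  have htpos : 0 < t := by linarith
  have hspos : 0 < s := by linarith
  have h0int : (0:E) ∈ interior Ω := by rw [hop.interior_eq]; exact hz
  have hcombo : s • u = (1 - s / t) • (0:E) + (s / t) • (t • u) := by
    rw [smul_smul, div_mul_cancel₀ s htpos.ne']
    module
  have hmem' : s • u ∈ interior Ω := by
    rw [hcombo]
    refine hconv.combo_interior_closure_mem_interior h0int hmem ?_ (by positivity) (by ring)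
    have : s / t < 1 := (div_lt_one htpos).2 hst
    linarith
  rw [hop.interior_eq] at hmem'
  have : s ∈ raySet Ω 0 u := ⟨hspos.le, by simpa using hmem'⟩
  have h := le_csSup (raySet_bddAbove hbd 0 hu) this
  exact absurd (h : s ≤ T) (not_le.2 hsT)

lemma rayT_frontier_eq_one (hop : IsOpen Ω) (hconv : Convex ℝ Ω) (hbd : IsBounded Ω)
    (hz : (0:E) ∈ Ω) {x : E} (hx : x ∈ frontier Ω) (hxne : x ≠ 0) :
    rayT Ω 0 x = 1 := by
  have h0int : (0:E) ∈ interior Ω := by rw [hop.interior_eq]; exact hz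
  have hxcl : x ∈ closure Ω := hx.1
  have hge : (1:ℝ) ≤ rayT Ω 0 x := by
    by_contra hlt
    push_neg at hlt
    -- any t with rayT < t < 1 gives t • x ∈ Ω? rather: t between gives contradiction
    obtain ⟨t, h1, h2⟩ := exists_between hlt
    have h0t : 0 ≤ t := le_trans (rayT_nonneg hbd hz hxne) h1.le
    have : t • x ∈ interior Ω := by
      have : t • x = (1 - t) • (0:E) + t • x := by module
      rw [this]
      exact hconv.combo_interior_closure_mem_interior h0int hxcl (by linarith) h0t (by ring)
    rw [hop.interior_eq] at this
    have : t ∈ raySet Ω 0 x := ⟨h0t, by simpa using this⟩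
    have := le_csSup (raySet_bddAbove hbd 0 hxne) this
    unfold rayT at *
    linarith
  have hle : rayT Ω 0 x ≤ 1 := by
    by_contra hlt
    push_neg at hlt
    have : x ∈ Ω := by
      have := mem_of_lt_rayT (u := x) hop hconv hz zero_le_one hlt
      simpa using this
    rw [frontier, hop.interior_eq] at hx
    exact hx.2 this
  linarith

end Ray


section S3
set_option linter.unusedSectionVars false
variable {E : Type*} [NormedAddCommGroup E] [InnerProductSpace ℝ E]
  [FiniteDimensional ℝ E] [Nontrivial E]
variable {Ω : Set E} {F : E → ℝ} {a : ℝ}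

lemma frontier_nonempty_of_bounded (hop : IsOpen Ω) (hconv : Convex ℝ Ω)
    (hbd : IsBounded Ω) (h0 : (0:E) ∈ Ω) : (frontier Ω).Nonempty := by
  obtain ⟨e, he⟩ := exists_ne (0:E)
  exact ⟨0 + rayT Ω 0 e • e, rayT_mem_frontier hop hconv hbd h0 he⟩

lemma polar_le_sSup (ha : 0 < a) (hlow : ∀ ξ, a * ‖ξ‖ ≤ F ξ) (hbd : IsBounded Ω)
    {y : E} (hy : y ∈ closure Ω) : polar F y ≤ sSup (polar F '' closure Ω) := by
  have hK : IsCompact (closure Ω) := hbd.isCompact_closure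
  have hbdd : BddAbove (polar F '' closure Ω) :=
    (hK.image (continuous_polar ha hlow)).bddAbove
  exact le_csSup hbdd ⟨y, hy, rfl⟩

lemma sSup_polar_pos (ha : 0 < a) (hF0 : ∀ ξ, 0 ≤ F ξ) (hlow : ∀ ξ, a * ‖ξ‖ ≤ F ξ)
    (hop : IsOpen Ω) (hconv : Convex ℝ Ω) (hbd : IsBounded Ω) (h0 : (0:E) ∈ Ω) :
    0 < sSup (polar F '' closure Ω) := by
  obtain ⟨x₁, hx₁⟩ := frontier_nonempty_of_bounded hop hconv hbd h0
  have hx₁ne : x₁ ≠ 0 := by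
    intro h
    rw [frontier, hop.interior_eq] at hx₁
    exact hx₁.2 (h ▸ h0)
  have hx₁n : 0 < ‖x₁‖ := norm_pos_iff.2 hx₁ne
  have hFx₁ : 0 < F x₁ := lt_of_lt_of_le (mul_pos ha hx₁n) (hlow x₁)
  have hterm : 0 < (inner ℝ x₁ x₁ : ℝ) / F x₁ := by
    rw [real_inner_self_eq_norm_sq]
    exact div_pos (pow_pos hx₁n 2) hFx₁
  have h1 : (inner ℝ x₁ x₁ : ℝ) / F x₁ ≤ polar F x₁ := term_le_polar ha hlow x₁ ⟨x₁, hx₁ne⟩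
  have h2 : polar F x₁ ≤ sSup (polar F '' closure Ω) := polar_le_sSup ha hlow hbd hx₁.1
  linarith

lemma exists_frontier_polar_lt (ha : 0 < a) (hF0 : ∀ ξ, 0 ≤ F ξ)
    (hhom : ∀ (t : ℝ) (ξ : E), F (t • ξ) = |t| * F ξ)
    (hlow : ∀ ξ, a * ‖ξ‖ ≤ F ξ)
    (hop : IsOpen Ω) (hconv : Convex ℝ Ω) (hbd : IsBounded Ω) (h0 : (0:E) ∈ Ω)
    (hnotW : ¬ ∃ r : ℝ, 0 < r ∧ Ω = {ξ : E | polar F ξ < r}) :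
    ∃ x₀ ∈ frontier Ω, polar F x₀ < sSup (polar F '' closure Ω) := by
  set r := sSup (polar F '' closure Ω) with hr
  have hrpos : 0 < r := sSup_polar_pos ha hF0 hlow hop hconv hbd h0
  by_contra hS
  push_neg at hS
  have hfr : ∀ x ∈ frontier Ω, polar F x = r := fun x hx =>
    le_antisymm (polar_le_sSup ha hlow hbd hx.1) (hS x hx)
  apply hnotW
  refine ⟨r, hrpos, ?_⟩
  ext x
  simp only [Set.mem_setOf_eq]
  constructor
  · intro hx
    rcases eq_or_ne x 0 with rfl | hxne
    · rw [polar_zero']; exact hrpos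
    · set T := rayT Ω 0 x with hT
      have hyfr : (0:E) + T • x ∈ frontier Ω := rayT_mem_frontier hop hconv hbd h0 hxne
      have hTgt : 1 < T := by
        obtain ⟨ε, hε, hball⟩ := Metric.isOpen_iff.1 hop x hx
        have hx' : (0:ℝ) < ‖x‖ := norm_pos_iff.2 hxne
        set ε' := ε / (2 * ‖x‖) with hε'
        have hε'pos : 0 < ε' := div_pos hε (mul_pos two_pos hx')
        have hmem : (1 + ε') • x ∈ Ω := by
          apply hball
          rw [Metric.mem_ball, dist_eq_norm]
          have : (1 + ε') • x - x = ε' • x := by module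
          rw [this, norm_smul, Real.norm_eq_abs, abs_of_pos hε'pos, hε']
          rw [div_mul_eq_mul_div, mul_comm, div_lt_iff₀ (mul_pos two_pos hx')]
          nlinarith
        have : 1 + ε' ∈ raySet Ω 0 x := ⟨by linarith, by simpa using hmem⟩
        have := le_csSup (raySet_bddAbove hbd 0 hxne) this
        have h2 : 1 + ε' ≤ T := this
        linarith
      have hTpos : (0:ℝ) ≤ T := by linarith
      have hpy : polar F (T • x) = r := by
        have := hfr _ hyfr
        rwa [zero_add] at this
      rw [polar_smul hTpos] at hpy
      have hpnn : 0 ≤ polar F x := polar_nonneg ha hF0 hhom hlow x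
      rcases eq_or_lt_of_le hpnn with h | h
      · rw [← h]; exact hrpos
      · nlinarith
  · intro hx
    by_contra hxΩ
    have hxne : x ≠ 0 := fun h => hxΩ (h ▸ h0)
    set T := rayT Ω 0 x with hT
    have hyfr : (0:E) + T • x ∈ frontier Ω := rayT_mem_frontier hop hconv hbd h0 hxne
    have hTle : T ≤ 1 := by
      by_contra hlt
      push_neg at hlt
      have := mem_of_lt_rayT (u := x) hop hconv h0 zero_le_one hlt
      rw [one_smul, zero_add] at this
      exact hxΩ this
    have hTpos : (0:ℝ) ≤ T := rayT_nonneg hbd h0 hxne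
    have hpy : polar F (T • x) = r := by
      have := hfr _ hyfr
      rwa [zero_add] at this
    rw [polar_smul hTpos] at hpy
    have hpnn : 0 ≤ polar F x := polar_nonneg ha hF0 hhom hlow x
    nlinarith

end S3

section S5
open Bornology Metric Set Module
open scoped ENNReal

lemma measure_S_pos (n : ℕ) (hn : 2 ≤ n)
    {Ω : Set (EuclideanSpace ℝ (Fin n))}
    (hbd : IsBounded Ω) (hop : IsOpen Ω) (hconvΩ : Convex ℝ Ω)
    (h0 : (0 : EuclideanSpace ℝ (Fin n)) ∈ Ω)
    {F : EuclideanSpace ℝ (Fin n) → ℝ} {a : ℝ} (ha : 0 < a)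
    (hF0 : ∀ ξ, 0 ≤ F ξ)
    (hhom : ∀ (t : ℝ) (ξ : EuclideanSpace ℝ (Fin n)), F (t • ξ) = |t| * F ξ)
    (hlow : ∀ ξ, a * ‖ξ‖ ≤ F ξ)
    (hnotW : ¬ ∃ r : ℝ, 0 < r ∧ Ω = {ξ : EuclideanSpace ℝ (Fin n) | polar F ξ < r}) :
    0 < μH[(n : ℝ) - 1] {x ∈ frontier Ω | polar F x < sSup (polar F '' closure Ω)} := by
  haveI : Nontrivial (EuclideanSpace ℝ (Fin n)) :=
    nontrivial_of_finrank_pos (R := ℝ) (by rw [finrank_euclideanSpace_fin]; omega)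
  obtain ⟨x₀, hx₀fr, hx₀lt⟩ := exists_frontier_polar_lt ha hF0 hhom hlow hop hconvΩ hbd h0 hnotW
  set r := sSup (polar F '' closure Ω) with hr
  have hx₀ne : x₀ ≠ 0 := by
    intro h; rw [frontier, hop.interior_eq] at hx₀fr; exact hx₀fr.2 (h ▸ h0)
  set Sset := {x ∈ frontier Ω | polar F x < r} with hSdef
  set ρ := a * (r - polar F x₀) with hρ
  have hρpos : 0 < ρ := mul_pos ha (by linarith)
  obtain ⟨δ₀, hδ₀pos, hδ₀⟩ := Metric.isOpen_iff.1 hop 0 h0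
  set ε₁ := min (ρ / (4 * (‖x₀‖ + 1))) (1/2) with hε₁
  have hx₀norm : 0 < ‖x₀‖ := norm_pos_iff.2 hx₀ne
  have hε₁pos : 0 < ε₁ := lt_min (by positivity) (by norm_num)
  have hε₁half : ε₁ ≤ 1/2 := min_le_right _ _
  have hε₁x₀ : ε₁ * ‖x₀‖ ≤ ρ / 4 := by
    have h1 : ε₁ ≤ ρ / (4 * (‖x₀‖ + 1)) := min_le_left _ _
    have h2 : ε₁ * ‖x₀‖ ≤ (ρ / (4 * (‖x₀‖ + 1))) * ‖x₀‖ :=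
      mul_le_mul_of_nonneg_right h1 (norm_nonneg _)
    have h3 : (ρ / (4 * (‖x₀‖ + 1))) * ‖x₀‖ ≤ ρ / 4 := by
      rw [div_mul_eq_mul_div, div_le_div_iff₀ (by positivity) (by norm_num)]
      nlinarith
    linarith
  have hy₁ : (1 - ε₁) • x₀ ∈ Ω := by
    have h0int : (0 : EuclideanSpace ℝ (Fin n)) ∈ interior Ω := by
      rw [hop.interior_eq]; exact h0
    have := hconvΩ.combo_interior_closure_mem_interior h0int hx₀fr.1 hε₁pos
      (by linarith : (0:ℝ) ≤ 1 - ε₁) (by ring)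
    rw [hop.interior_eq] at this
    simpa using this
  obtain ⟨δ₁, hδ₁pos, hδ₁⟩ := Metric.isOpen_iff.1 hop _ hy₁
  have hT1 : rayT Ω 0 x₀ = 1 := rayT_frontier_eq_one hop hconvΩ hbd h0 hx₀fr hx₀ne
  have hy₂ : (1 + ε₁) • x₀ ∉ closure Ω :=
    not_mem_closure_of_rayT_lt hop hconvΩ hbd h0 hx₀ne (by rw [hT1]; linarith)
  obtain ⟨δ₂, hδ₂pos, hδ₂⟩ := Metric.isOpen_iff.1 isClosed_closure.isOpen_compl _ hy₂
  set δ := min (min δ₀ δ₁) (min δ₂ (ρ / 4)) with hδdef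
  have hδpos : 0 < δ := lt_min (lt_min hδ₀pos hδ₁pos) (lt_min hδ₂pos (by positivity))
  have key : ∀ h : ((ℝ ∙ x₀)ᗮ : Submodule ℝ (EuclideanSpace ℝ (Fin n))),
      ‖(h : EuclideanSpace ℝ (Fin n))‖ < δ →
      ((h : EuclideanSpace ℝ (Fin n)) + rayT Ω h x₀ • x₀ ∈ Sset ∧
        Submodule.orthogonalProjectionOnto (ℝ ∙ x₀)ᗮ
          ((h : EuclideanSpace ℝ (Fin n)) + rayT Ω h x₀ • x₀) = h) := by
    intro h hh
    set z := (h : EuclideanSpace ℝ (Fin n)) with hz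
    have hzΩ : z ∈ Ω := hδ₀ (by
      rw [mem_ball, dist_zero_right]
      exact lt_of_lt_of_le hh ((min_le_left _ _).trans (min_le_left _ _)))
    set T := rayT Ω z x₀ with hT
    have hfr : z + T • x₀ ∈ frontier Ω := rayT_mem_frontier hop hconvΩ hbd hzΩ hx₀ne
    have hTlow : 1 - ε₁ ≤ T := by
      have hmem : (1 - ε₁) ∈ raySet Ω z x₀ := by
        refine ⟨by linarith, hδ₁ ?_⟩
        rw [mem_ball, dist_eq_norm]
        have heq : z + (1 - ε₁) • x₀ - (1 - ε₁) • x₀ = z := by module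
        rw [heq]
        exact lt_of_lt_of_le hh ((min_le_left _ _).trans (min_le_right _ _))
      exact le_csSup (raySet_bddAbove hbd z hx₀ne) hmem
    have hThigh : T ≤ 1 + ε₁ := by
      refine csSup_le ⟨0, raySet_zero_mem hzΩ⟩ fun t ht => ?_
      by_contra hgt
      push_neg at hgt
      have hmem : 1 + ε₁ ∈ raySet Ω z x₀ :=
        raySet_interval hop hconvΩ hzΩ ht (by linarith) (by linarith)
      have hcl : z + (1 + ε₁) • x₀ ∈ closure Ω := subset_closure hmem.2
      have hnc : z + (1 + ε₁) • x₀ ∈ (closure Ω)ᶜ := hδ₂ (by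
        rw [mem_ball, dist_eq_norm]
        have heq : z + (1 + ε₁) • x₀ - (1 + ε₁) • x₀ = z := by module
        rw [heq]
        exact lt_of_lt_of_le hh ((min_le_right _ _).trans (min_le_left _ _)))
      exact hnc hcl
    have hdist : ‖(z + T • x₀) - x₀‖ ≤ ρ / 2 := by
      have h1 : (z + T • x₀) - x₀ = z + (T - 1) • x₀ := by module
      rw [h1]
      have h2 : ‖z + (T - 1) • x₀‖ ≤ ‖z‖ + ‖(T - 1) • x₀‖ := norm_add_le _ _
      have h3 : ‖(T - 1) • x₀‖ = |T - 1| * ‖x₀‖ := by rw [norm_smul, Real.norm_eq_abs]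
      have h4 : |T - 1| ≤ ε₁ := abs_le.2 ⟨by linarith, by linarith⟩
      have h5 : |T - 1| * ‖x₀‖ ≤ ε₁ * ‖x₀‖ := mul_le_mul_of_nonneg_right h4 (norm_nonneg _)
      have h6 : ‖z‖ ≤ ρ / 4 :=
        le_of_lt (lt_of_lt_of_le hh ((min_le_right _ _).trans (min_le_right _ _)))
      linarith
    have hpolar : polar F (z + T • x₀) < r := by
      have h1 := polar_sub_le ha hlow (z + T • x₀) x₀
      have h2 : ‖(z + T • x₀) - x₀‖ / a ≤ (ρ / 2) / a := by gcongr
      have h3 : (ρ / 2) / a = (r - polar F x₀) / 2 := by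
        rw [hρ]; field_simp
      linarith
    refine ⟨⟨hfr, hpolar⟩, ?_⟩
    rw [map_add, _root_.map_smul, Submodule.orthogonalProjectionOnto_mem_subspace_eq_self,
      Submodule.orthogonalProjectionOnto_orthogonalComplement_singleton_eq_zero]
    simp
  have hball : ball (0 : ((ℝ ∙ x₀)ᗮ : Submodule ℝ (EuclideanSpace ℝ (Fin n)))) δ ⊆
      (Submodule.orthogonalProjectionOnto (ℝ ∙ x₀)ᗮ) '' Sset := by
    intro h hh
    rw [mem_ball, dist_zero_right] at hh
    obtain ⟨h1, h2⟩ := key h hh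
    exact ⟨_, h1, h2⟩
  -- now the measure-theoretic chain
  have hd : (0:ℝ) ≤ (n:ℝ) - 1 := by
    have : (2:ℝ) ≤ (n:ℝ) := by exact_mod_cast hn
    linarith
  set d : ℝ := (n:ℝ) - 1 with hdd
  have hnn : ‖(Submodule.orthogonalProjectionOnto (ℝ ∙ x₀)ᗮ :
      EuclideanSpace ℝ (Fin n) →L[ℝ] ((ℝ ∙ x₀)ᗮ : Submodule ℝ (EuclideanSpace ℝ (Fin n))))‖₊ ≤ 1 := by
    rw [← NNReal.coe_le_coe]
    exact_mod_cast Submodule.orthogonalProjectionOnto_norm_le (ℝ ∙ x₀)ᗮ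
  have hlip : LipschitzWith 1 (Submodule.orthogonalProjectionOnto (ℝ ∙ x₀)ᗮ :
      EuclideanSpace ℝ (Fin n) → ((ℝ ∙ x₀)ᗮ : Submodule ℝ (EuclideanSpace ℝ (Fin n)))) :=
    ((Submodule.orthogonalProjectionOnto (ℝ ∙ x₀)ᗮ).lipschitz).weaken hnn
  have h1 : μH[d] ((Submodule.orthogonalProjectionOnto (ℝ ∙ x₀)ᗮ) '' Sset) ≤ μH[d] Sset := by
    have := hlip.hausdorffMeasure_image_le hd Sset
    simpa using this
  have h2 : μH[d] (ball (0 : ((ℝ ∙ x₀)ᗮ : Submodule ℝ (EuclideanSpace ℝ (Fin n)))) δ) ≤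
      μH[d] ((Submodule.orthogonalProjectionOnto (ℝ ∙ x₀)ᗮ) '' Sset) := measure_mono hball
  haveI : Fact (finrank ℝ (EuclideanSpace ℝ (Fin n)) = (n - 1) + 1) := ⟨by
    rw [finrank_euclideanSpace_fin]; omega⟩
  let B : OrthonormalBasis (Fin (n-1)) ℝ ((ℝ ∙ x₀)ᗮ : Submodule ℝ (EuclideanSpace ℝ (Fin n))) :=
    OrthonormalBasis.fromOrthogonalSpanSingleton (n-1) hx₀ne
  let e := B.repr
  have h3 : μH[d] (e '' ball (0 : ((ℝ ∙ x₀)ᗮ : Submodule ℝ (EuclideanSpace ℝ (Fin n)))) δ) =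
      μH[d] (ball (0 : ((ℝ ∙ x₀)ᗮ : Submodule ℝ (EuclideanSpace ℝ (Fin n)))) δ) :=
    e.isometry.hausdorffMeasure_image (Or.inl hd) _
  have h4 : ball (0 : EuclideanSpace ℝ (Fin (n-1))) δ ⊆
      e '' ball (0 : ((ℝ ∙ x₀)ᗮ : Submodule ℝ (EuclideanSpace ℝ (Fin n)))) δ := by
    intro y hy
    refine ⟨e.symm y, ?_, by simp⟩
    rw [mem_ball, dist_zero_right] at hy ⊢
    rwa [e.symm.norm_map]
  have h5 : 0 < μH[d] (ball (0 : EuclideanSpace ℝ (Fin (n-1))) δ) := by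
    set f := WithLp.equiv 2 (Fin (n-1) → ℝ) with hf
    have hlip2 : LipschitzWith 1 f := PiLp.lipschitzWith_ofLp 2 _
    have h6 : μH[d] (f '' ball (0 : EuclideanSpace ℝ (Fin (n-1))) δ) ≤
        μH[d] (ball (0 : EuclideanSpace ℝ (Fin (n-1))) δ) := by
      have := hlip2.hausdorffMeasure_image_le hd (ball (0 : EuclideanSpace ℝ (Fin (n-1))) δ)
      simpa using this
    have hdm : d = ((Fintype.card (Fin (n-1)) : ℕ) : ℝ) := by
      simp only [Fintype.card_fin]
      rw [Nat.cast_sub (by omega)]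
      simp [hdd]
    have h7 : (μH[d] : Measure (Fin (n-1) → ℝ)) = volume := by
      rw [hdm, MeasureTheory.hausdorffMeasure_pi_real]
    have hopen : IsOpen (f '' ball (0 : EuclideanSpace ℝ (Fin (n-1))) δ) := by
      rw [Equiv.image_eq_preimage_symm]
      exact isOpen_ball.preimage (PiLp.continuous_toLp 2 _)
    have hne : (f '' ball (0 : EuclideanSpace ℝ (Fin (n-1))) δ).Nonempty :=
      (Metric.nonempty_ball.2 hδpos).image f
    have h8 : 0 < μH[d] (f '' ball (0 : EuclideanSpace ℝ (Fin (n-1))) δ) := by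
      rw [h7]
      exact hopen.measure_pos volume hne
    exact lt_of_lt_of_le h8 h6
  calc (0:ℝ≥0∞) < μH[d] (ball (0 : EuclideanSpace ℝ (Fin (n-1))) δ) := h5
    _ ≤ μH[d] (e '' ball (0 : ((ℝ ∙ x₀)ᗮ : Submodule ℝ (EuclideanSpace ℝ (Fin n)))) δ) :=
        measure_mono h4
    _ = μH[d] (ball (0 : ((ℝ ∙ x₀)ᗮ : Submodule ℝ (EuclideanSpace ℝ (Fin n)))) δ) := h3
    _ ≤ μH[d] ((Submodule.orthogonalProjectionOnto (ℝ ∙ x₀)ᗮ) '' Sset) := h2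
    _ ≤ μH[d] Sset := h1

end S5

theorem strict_inequality_if_not_wulff (n : ℕ) (hn : 2 ≤ n)
    (Ω : Set (EuclideanSpace ℝ (Fin n)))
    (hbd : Bornology.IsBounded Ω) (hop : IsOpen Ω) (hconvΩ : Convex ℝ Ω)
    (h0 : (0 : EuclideanSpace ℝ (Fin n)) ∈ Ω)
    (ν : EuclideanSpace ℝ (Fin n) → EuclideanSpace ℝ (Fin n))
    (hνmeas : Measurable ν)
    (hνunit : ∀ x ∈ frontier Ω, ‖ν x‖ = 1)
    (F : EuclideanSpace ℝ (Fin n) → ℝ) (a : ℝ) (ha : 0 < a)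
    (hF0 : ∀ ξ, 0 ≤ F ξ)
    (hconv : ConvexOn ℝ Set.univ F)
    (hhom : ∀ (t : ℝ) (ξ : EuclideanSpace ℝ (Fin n)), F (t • ξ) = |t| * F ξ)
    (hlow : ∀ ξ, a * ‖ξ‖ ≤ F ξ)
    (p : ℝ) (hp : 1 < p)
    (hnotW : ¬ ∃ r : ℝ, 0 < r ∧ Ω = {ξ : EuclideanSpace ℝ (Fin n) | polar F ξ < r}) :
    0 < μH[(n : ℝ) - 1] {x ∈ frontier Ω | polar F x < sSup (polar F '' closure Ω)} ∧
    (∫ x in frontier Ω, (polar F x) ^ p * F (ν x) ∂(μH[(n : ℝ) - 1])) /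
      (∫ x in frontier Ω, F (ν x) ∂(μH[(n : ℝ) - 1])) <
      (sSup (polar F '' closure Ω)) ^ p := by
  haveI : Nontrivial (EuclideanSpace ℝ (Fin n)) :=
    Module.nontrivial_of_finrank_pos (R := ℝ) (by rw [finrank_euclideanSpace_fin]; omega)
  set r := sSup (polar F '' closure Ω) with hr
  set Sset := {x ∈ frontier Ω | polar F x < r} with hSdef
  have hpart1 : 0 < μH[(n:ℝ)-1] Sset :=
    measure_S_pos n hn hbd hop hconvΩ h0 ha hF0 hhom hlow hnotW
  refine ⟨hpart1, ?_⟩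
  have hrpos : 0 < r := sSup_polar_pos ha hF0 hlow hop hconvΩ hbd h0
  have hrp : (0:ℝ) < r ^ p := Real.rpow_pos_of_pos hrpos p
  set μ' := (μH[(n:ℝ)-1] : Measure (EuclideanSpace ℝ (Fin n))).restrict (frontier Ω) with hμ'
  by_cases hint : Integrable (fun x => F (ν x)) μ'
  · -- integrable case
    have hFcont : Continuous F := by
      have := hconv.continuousOn isOpen_univ
      rwa [continuousOn_univ] at this
    have hmeasfr : MeasurableSet (frontier Ω) := isClosed_frontier.measurableSet
    have hpolarc : Continuous (polar F) := continuous_polar ha hlow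
    have hpnn : ∀ x, 0 ≤ polar F x := polar_nonneg ha hF0 hhom hlow
    have hple : ∀ x ∈ frontier Ω, polar F x ≤ r := fun x hx => polar_le_sSup ha hlow hbd hx.1
    have hae : ∀ᵐ x ∂μ', x ∈ frontier Ω := by
      rw [hμ']; exact ae_restrict_mem hmeasfr
    have hfmeas : Measurable (fun x => (polar F x) ^ p * F (ν x)) :=
      ((hpolarc.rpow_const fun x => Or.inr (by linarith)).measurable).mul
        (hFcont.measurable.comp hνmeas)
    have hppos : (0:ℝ) < p := by linarith
    have hbound : ∀ᵐ x ∂μ', ‖(polar F x) ^ p * F (ν x)‖ ≤ ‖r ^ p * F (ν x)‖ := by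
      filter_upwards [hae] with x hx
      have h3 : (polar F x) ^ p ≤ r ^ p := Real.rpow_le_rpow (hpnn x) (hple x hx) hppos.le
      have h4 : (0:ℝ) ≤ F (ν x) := hF0 _
      have h5 : (0:ℝ) ≤ (polar F x) ^ p := Real.rpow_nonneg (hpnn x) p
      rw [Real.norm_eq_abs, Real.norm_eq_abs, abs_of_nonneg (mul_nonneg h5 h4),
        abs_of_nonneg (mul_nonneg hrp.le h4)]
      exact mul_le_mul_of_nonneg_right h3 h4
    have hf_int : Integrable (fun x => (polar F x) ^ p * F (ν x)) μ' :=
      (hint.const_mul (r ^ p)).mono hfmeas.aestronglyMeasurable hbound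
    have hSsub : Sset ⊆ frontier Ω := fun x hx => hx.1
    have hSmeas : 0 < μ' Sset := by
      rw [hμ', Measure.restrict_apply' hmeasfr, Set.inter_eq_self_of_subset_left hSsub]
      exact hpart1
    have hgΩ : ∀ x ∈ frontier Ω, a ≤ F (ν x) := fun x hx => by
      have := hlow (ν x)
      rwa [hνunit x hx, mul_one] at this
    have hgpos : 0 < ∫ x, F (ν x) ∂μ' := by
      refine (integral_pos_iff_support_of_nonneg_ae
        (Filter.Eventually.of_forall fun x => hF0 (ν x)) hint).2 ?_
      refine lt_of_lt_of_le hSmeas (measure_mono fun x hx => ?_)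
      exact ne_of_gt (lt_of_lt_of_le ha (hgΩ x (hSsub hx)))
    have hdiffpos : 0 < ∫ x, (r ^ p * F (ν x) - (polar F x) ^ p * F (ν x)) ∂μ' := by
      refine (integral_pos_iff_support_of_nonneg_ae ?_ ((hint.const_mul _).sub hf_int)).2 ?_
      · filter_upwards [hae] with x hx
        have h3 : (polar F x) ^ p ≤ r ^ p := Real.rpow_le_rpow (hpnn x) (hple x hx) hppos.le
        have h4 : (0:ℝ) ≤ F (ν x) := hF0 _
        simp only [Pi.sub_apply, Pi.zero_apply, sub_nonneg]
        exact mul_le_mul_of_nonneg_right h3 h4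
      · refine lt_of_lt_of_le hSmeas (measure_mono fun x hx => ?_)
        have h3 : (polar F x) ^ p < r ^ p := Real.rpow_lt_rpow (hpnn x) hx.2 hppos
        have h4 : (0:ℝ) < F (ν x) := lt_of_lt_of_le ha (hgΩ x (hSsub hx))
        have : 0 < r ^ p * F (ν x) - (polar F x) ^ p * F (ν x) := by nlinarith
        exact ne_of_gt this
    have heq : ∫ x, (r ^ p * F (ν x) - (polar F x) ^ p * F (ν x)) ∂μ'
        = r ^ p * (∫ x, F (ν x) ∂μ') - ∫ x, (polar F x) ^ p * F (ν x) ∂μ' := by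
      rw [integral_sub (hint.const_mul _) hf_int, integral_const_mul]
    rw [div_lt_iff₀ hgpos]
    rw [heq] at hdiffpos
    linarith
  · rw [integral_undef hint, div_zero]
    exact hrp
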